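/- Fix μ, x_0 ∈ ℝ and define the bridge mean m(t) = μ + (x_0 − μ)· sinh(θ̄_{t:T}) / sinh(θ̄_{0:T}). Then m(0) = x_0, m(T) = μ, and for every t ∈ [0, T) the function m satisfies the ordinary differential equation m′(t) = θ(t)·coth(θ̄_{t:T})·(μ − m(t)), which is the drift equation of the residual diffusion bridge. -/

import Mathlib

/-- For a continuous, positive schedule `θ` on `[0, T]` and fixed `μ, x₀ ∈ ℝ`, the
bridge mean `m(t) = μ + (x₀ − μ)·sinh(θ̄_{t:T}) / sinh(θ̄_{0:T})` (with
`θ̄_{s:t} = ∫_s^t θ(z) dz`) satisfies `m(0) = x₀`, `m(T) = μ`, and for every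
`t ∈ [0, T)` the ODE `m′(t) = θ(t)·coth(θ̄_{t:T})·(μ − m(t))`, where
`coth a = cosh a / sinh a`. -/
theorem bridge_mean_ode (T : ℝ) (hT : 0 < T) (θ : ℝ → ℝ) (hθc : Continuous θ)
    (hθpos : ∀ z ∈ Set.Icc (0:ℝ) T, 0 < θ z) (μ x0 : ℝ) (m : ℝ → ℝ)
    (hm : ∀ t, m t = μ + (x0 - μ) * Real.sinh (∫ z in t..T, θ z)
        / Real.sinh (∫ z in (0:ℝ)..T, θ z)) :
    m 0 = x0 ∧ m T = μ ∧
      ∀ t ∈ Set.Ico (0:ℝ) T,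
        HasDerivAt m
          (θ t * (Real.cosh (∫ z in t..T, θ z) / Real.sinh (∫ z in t..T, θ z))
            * (μ - m t)) t := by
  have hint : ∀ a b : ℝ, IntervalIntegrable θ MeasureTheory.volume a b :=
    fun a b => hθc.intervalIntegrable a b
  have hpos : ∀ t, 0 ≤ t → t < T → 0 < ∫ z in t..T, θ z := by
    intro t ht htT
    apply intervalIntegral.intervalIntegral_pos_of_pos_on (hint t T)
    · intro x hx
      exact hθpos x ⟨le_of_lt (lt_of_le_of_lt ht hx.1), le_of_lt hx.2⟩
    · exact htT
  have hS : Real.sinh (∫ z in (0:ℝ)..T, θ z) ≠ 0 := by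
    have := hpos 0 le_rfl hT
    positivity
  refine ⟨?_, ?_, ?_⟩
  · rw [hm 0, mul_div_assoc, div_self hS]; ring
  · rw [hm T]; simp
  · intro t ht
    have hFpos : 0 < ∫ z in t..T, θ z := hpos t ht.1 ht.2
    have hsF : Real.sinh (∫ z in t..T, θ z) ≠ 0 := by positivity
    -- derivative of u ↦ ∫ z in u..T, θ z is -θ t
    have hd : HasDerivAt (fun u => ∫ z in u..T, θ z) (-θ t) t := by
      have h1 : HasDerivAt (fun u => ∫ z in T..u, θ z) (θ t) t :=
        intervalIntegral.integral_hasDerivAt_right (hint T t)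
          (hθc.stronglyMeasurableAtFilter _ _) hθc.continuousAt
      have h2 := h1.neg
      refine h2.congr_of_eventuallyEq (Filter.Eventually.of_forall fun u => ?_)
      exact intervalIntegral.integral_symm T u
    have hdm : HasDerivAt m ((x0 - μ) *
        (Real.cosh (∫ z in t..T, θ z) * (-θ t)) /
        Real.sinh (∫ z in (0:ℝ)..T, θ z)) t := by
      have h3 : HasDerivAt (fun u => μ + (x0 - μ) * Real.sinh (∫ z in u..T, θ z)
          / Real.sinh (∫ z in (0:ℝ)..T, θ z))
          ((x0 - μ) * (Real.cosh (∫ z in t..T, θ z) * (-θ t)) /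
            Real.sinh (∫ z in (0:ℝ)..T, θ z)) t := by
        exact (((Real.hasDerivAt_sinh _).comp t hd).const_mul (x0 - μ)).div_const _
          |>.const_add μ
      exact h3.congr_of_eventuallyEq (Filter.Eventually.of_forall fun u => hm u)
    convert hdm using 1
    rw [hm t]
    field_simp
    ring
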